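/- Let μ be a boundedly finite Borel measure on E = [0,∞)² ∖ {(0,0)} that is homogeneous of degree −1, let ‖·‖ be a norm on ℝ² with ‖(1,0)‖ = 1 = ‖(0,1)‖, and let Φ be the spectral measure of μ with respect to ‖·‖. Then for every Borel measurable function f : E → [0,∞], ∫_E f dμ = ∫_{[0,π/2]} ∫₀^∞ f( r·sinθ/‖(sinθ,cosθ)‖ , r·cosθ/‖(sinθ,cosθ)‖ ) r⁻² dr Φ(dθ); that is, in the polar coordinates r = ‖z‖, θ = θ(z), the measure μ is the product measure r⁻² dr Φ(dθ). -/

import Mathlib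

open MeasureTheory Set Real Filter Topology
open scoped ENNReal Pointwise

noncomputable section

/-- The cone `E = [0,∞)² \ {(0,0)}` as a subset of `ℝ²`. -/
def Econe : Set (ℝ × ℝ) := (Ici 0 ×ˢ Ici 0) \ {((0 : ℝ), (0 : ℝ))}

/-- The angular coordinate `θ(z) = arctan (z₁ / z₂)`, with `θ(z) = π/2` when `z₂ = 0`. -/
def ang (z : ℝ × ℝ) : ℝ := if z.2 = 0 then π / 2 else Real.arctan (z.1 / z.2)

def Dsys : Set (Set ℝ) := {s | (∃ a ≤ (0:ℝ), s = Iic a) ∨ (∃ a > (0:ℝ), s = Ici a)}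

lemma isPiSystem_Dsys : IsPiSystem Dsys := by
  rintro s (⟨a, ha, rfl⟩ | ⟨a, ha, rfl⟩) t (⟨b, hb, rfl⟩ | ⟨b, hb, rfl⟩) hne
  · rw [Iic_inter_Iic]; exact Or.inl ⟨min a b, min_le_of_left_le ha, rfl⟩
  · exfalso; obtain ⟨x, hx1, hx2⟩ := hne
    simp only [mem_Iic, mem_Ici] at hx1 hx2; linarith
  · exfalso; obtain ⟨x, hx1, hx2⟩ := hne
    simp only [mem_Iic, mem_Ici] at hx1 hx2; linarith
  · rw [Ici_inter_Ici]; exact Or.inr ⟨max a b, lt_max_of_lt_left ha, rfl⟩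

lemma generateFrom_Dsys : MeasurableSpace.generateFrom Dsys = (inferInstance : MeasurableSpace ℝ) := by
  refine le_antisymm (MeasurableSpace.generateFrom_le ?_) ?_
  · rintro s (⟨a, _, rfl⟩ | ⟨a, _, rfl⟩)
    exacts [measurableSet_Iic, measurableSet_Ici]
  · rw [BorelSpace.measurable_eq (α := ℝ), borel_eq_generateFrom_Ici ℝ]
    refine MeasurableSpace.generateFrom_le ?_
    rintro s ⟨a, rfl⟩
    by_cases ha : 0 < a
    · exact MeasurableSpace.measurableSet_generateFrom (Or.inr ⟨a, ha, rfl⟩)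
    · push_neg at ha
      have : Ici a = (⋃ n : ℕ, Iic (a - 1 / (n + 1)))ᶜ := by
        ext x
        simp only [mem_Ici, mem_compl_iff, mem_iUnion, mem_Iic, not_exists, not_le]
        constructor
        · intro hx n
          have : (0:ℝ) < 1 / (n + 1) := by positivity
          linarith
        · intro h
          by_contra hlt
          push_neg at hlt
          obtain ⟨n, hn⟩ := exists_nat_one_div_lt (by linarith : (0:ℝ) < a - x)
          exact absurd (h n) (not_lt.2 (by linarith))
      rw [this]
      exact (MeasurableSet.iUnion fun n =>
        MeasurableSpace.measurableSet_generateFrom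
          (Or.inl ⟨a - 1 / (n + 1), by
            have : (0:ℝ) < 1 / (n + 1) := by positivity
            linarith, rfl⟩)).compl

lemma isCountablySpanning_Dsys : IsCountablySpanning Dsys := by
  refine ⟨fun n => if n = 0 then Iic 0 else Ici (1 / n), fun n => ?_, ?_⟩
  · by_cases h : n = 0
    · simp only [h, if_pos rfl]; exact Or.inl ⟨0, le_refl _, rfl⟩
    · simp only [if_neg h]
      have : 0 < (n:ℝ) := by exact_mod_cast Nat.pos_of_ne_zero h
      exact Or.inr ⟨1 / n, by positivity, rfl⟩
  · ext x
    simp only [mem_iUnion, mem_univ, iff_true]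
    by_cases hx : x ≤ 0
    · exact ⟨0, by simp [hx]⟩
    · push_neg at hx
      obtain ⟨n, hn⟩ := exists_nat_one_div_lt hx
      refine ⟨n + 1, ?_⟩
      rw [if_neg (Nat.succ_ne_zero n)]
      refine mem_Ici.2 (le_of_lt ?_)
      push_cast
      exact hn

theorem stmt2 (μ : Measure (ℝ × ℝ)) (hμE : μ Econeᶜ = 0)
    (hbf : ∀ ε > (0 : ℝ), μ {z | z ∈ Econe ∧ ε ≤ max z.1 z.2} < ⊤)
    (hhom : ∀ B : Set (ℝ × ℝ), B ⊆ Econe → MeasurableSet B → ∀ c > (0 : ℝ),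
      μ (c • B) = ENNReal.ofReal c⁻¹ * μ B)
    (Nn : ℝ × ℝ → ℝ)
    (hN_add : ∀ z w, Nn (z + w) ≤ Nn z + Nn w)
    (hN_smul : ∀ (c : ℝ) (z), Nn (c • z) = |c| * Nn z)
    (hN_zero : ∀ z, Nn z = 0 ↔ z = 0)
    (hN10 : Nn (1, 0) = 1) (hN01 : Nn (0, 1) = 1)
    (Φ : Measure ℝ)
    (hΦ : ∀ B : Set ℝ, MeasurableSet B →
      Φ B = μ {z | z ∈ Econe ∧ 1 ≤ Nn z ∧ ang z ∈ B}) :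
    ∀ f : ℝ × ℝ → ℝ≥0∞, Measurable f →
      ∫⁻ z, f z ∂μ =
        ∫⁻ θ in Icc 0 (π / 2),
          ∫⁻ r in Ioi (0 : ℝ),
            f (r * Real.sin θ / Nn (Real.sin θ, Real.cos θ),
               r * Real.cos θ / Nn (Real.sin θ, Real.cos θ)) *
              ENNReal.ofReal ((r ^ 2)⁻¹) ∂volume ∂Φ := by
  intro f hf
  -- basic facts about Nn
  have hN0 : Nn 0 = 0 := (hN_zero 0).2 rfl
  have hNneg : ∀ z, Nn (-z) = Nn z := by
    intro z
    have := hN_smul (-1) z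
    simpa using this
  have hNnonneg : ∀ z, 0 ≤ Nn z := by
    intro z
    have h := hN_add z (-z)
    rw [add_neg_cancel, hN0, hNneg] at h
    linarith
  have hNposne : ∀ z : ℝ × ℝ, z ≠ 0 → 0 < Nn z := by
    intro z hz
    rcases lt_or_eq_of_le (hNnonneg z) with h | h
    · exact h
    · exact absurd ((hN_zero z).1 h.symm) hz
  have hNsum : ∀ z : ℝ × ℝ, Nn z ≤ |z.1| + |z.2| := by
    intro z
    have hz : z = z.1 • ((1:ℝ), (0:ℝ)) + z.2 • ((0:ℝ), (1:ℝ)) := by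
      ext <;> simp
    calc Nn z = Nn (z.1 • ((1:ℝ), (0:ℝ)) + z.2 • ((0:ℝ), (1:ℝ))) := by rw [← hz]
      _ ≤ Nn (z.1 • ((1:ℝ), (0:ℝ))) + Nn (z.2 • ((0:ℝ), (1:ℝ))) := hN_add _ _
      _ = |z.1| + |z.2| := by rw [hN_smul, hN_smul, hN10, hN01, mul_one, mul_one]
  have hNcont : Continuous Nn := by
    have hlip : LipschitzWith 2 Nn := by
      refine LipschitzWith.of_dist_le_mul fun z w => ?_
      have h1 : Nn z - Nn w ≤ Nn (z - w) := by
        have h := hN_add w (z - w)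
        rw [add_sub_cancel] at h
        linarith
      have h2 : Nn w - Nn z ≤ Nn (z - w) := by
        have h := hN_add z (w - z)
        rw [add_sub_cancel] at h
        have : Nn (w - z) = Nn (z - w) := by
          rw [← hNneg (z - w), neg_sub]
        linarith
      have h3 : Nn (z - w) ≤ |z.1 - w.1| + |z.2 - w.2| := by
        simpa using hNsum (z - w)
      have h4 : |z.1 - w.1| ≤ dist z w := by
        rw [Prod.dist_eq]
        exact le_trans (le_of_eq (Real.dist_eq z.1 w.1).symm) (le_max_left _ _)
      have h5 : |z.2 - w.2| ≤ dist z w := by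
        rw [Prod.dist_eq]
        exact le_trans (le_of_eq (Real.dist_eq z.2 w.2).symm) (le_max_right _ _)
      rw [Real.dist_eq]
      have : |Nn z - Nn w| ≤ Nn (z - w) := abs_sub_le_iff.2 ⟨h1, h2⟩
      push_cast
      linarith
    exact hlip.continuous
  have hNmeas : Measurable Nn := hNcont.measurable
  have hEmeas : MeasurableSet Econe :=
    (measurableSet_Ici.prod measurableSet_Ici).diff (measurableSet_singleton _)
  have hang_meas : Measurable ang := by
    have h1 : MeasurableSet {z : ℝ × ℝ | z.2 = 0} :=
      measurable_snd (measurableSet_singleton 0)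
    exact Measurable.ite h1 measurable_const
      (Real.measurable_arctan.comp (measurable_fst.div measurable_snd))
  set S : ℝ × ℝ → ℝ × ℝ := fun z => (ang z, Nn z) with hS_def
  have hS : Measurable S := hang_meas.prodMk hNmeas
  have hNd_pos : ∀ θ : ℝ, 0 < Nn (Real.sin θ, Real.cos θ) := by
    intro θ
    refine hNposne _ ?_
    intro h
    have h1 : Real.sin θ = 0 := congrArg Prod.fst h
    have h2 : Real.cos θ = 0 := congrArg Prod.snd h
    nlinarith [Real.sin_sq_add_cos_sq θ]
  set g : ℝ × ℝ → ℝ × ℝ := fun p =>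
    (p.2 * Real.sin p.1 / Nn (Real.sin p.1, Real.cos p.1),
     p.2 * Real.cos p.1 / Nn (Real.sin p.1, Real.cos p.1)) with hg_def
  have hgcont : Continuous g := by
    have hd : Continuous fun p : ℝ × ℝ => Nn (Real.sin p.1, Real.cos p.1) :=
      hNcont.comp ((Real.continuous_sin.comp continuous_fst).prodMk
        (Real.continuous_cos.comp continuous_fst))
    exact ((continuous_snd.mul (Real.continuous_sin.comp continuous_fst)).div hd
        fun p => (hNd_pos p.1).ne').prodMk
      ((continuous_snd.mul (Real.continuous_cos.comp continuous_fst)).div hd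
        fun p => (hNd_pos p.1).ne')
  have hgmeas : Measurable g := hgcont.measurable
  set ρ : Measure ℝ := (volume.restrict (Ioi 0)).withDensity
    (fun r => ENNReal.ofReal ((r ^ 2)⁻¹)) with hρ_def
  -- scaling facts
  have hang_smul : ∀ (c : ℝ), 0 < c → ∀ z : ℝ × ℝ, ang (c • z) = ang z := by
    intro c hc z
    simp only [ang, Prod.smul_snd, Prod.smul_fst, smul_eq_mul]
    by_cases h : z.2 = 0
    · rw [if_pos (by rw [h, mul_zero]), if_pos h]
    · rw [if_neg (mul_ne_zero hc.ne' h), if_neg h, mul_div_mul_left _ _ hc.ne']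
  have hE_smul : ∀ (c : ℝ), 0 < c → ∀ z : ℝ × ℝ, z ∈ Econe → c • z ∈ Econe := by
    intro c hc z hz
    obtain ⟨⟨h1, h2⟩, h3⟩ := hz
    simp only [mem_Ici] at h1 h2
    refine ⟨⟨?_, ?_⟩, ?_⟩
    · exact mem_Ici.2 (mul_nonneg hc.le h1)
    · exact mem_Ici.2 (mul_nonneg hc.le h2)
    · intro hmem
      rw [mem_singleton_iff] at hmem
      have : c • z = (0 : ℝ × ℝ) := by rw [hmem]; exact Prod.mk_zero_zero
      rcases smul_eq_zero.1 this with h | h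
      · exact hc.ne' h
      · exact h3 (by rw [mem_singleton_iff, h]; exact Prod.mk_zero_zero.symm)
  -- Φ is finite
  have hΦfin : Φ univ ≠ ⊤ := by
    rw [hΦ univ MeasurableSet.univ]
    refine ne_of_lt (lt_of_le_of_lt (measure_mono ?_) (hbf (1/2) (by norm_num)))
    rintro z ⟨hzE, hz1, -⟩
    refine ⟨hzE, ?_⟩
    obtain ⟨⟨h1, h2⟩, -⟩ := hzE
    simp only [mem_Ici] at h1 h2
    have hs := hNsum z
    rw [abs_of_nonneg h1, abs_of_nonneg h2] at hs
    have hm1 : z.1 ≤ max z.1 z.2 := le_max_left _ _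
    have hm2 : z.2 ≤ max z.1 z.2 := le_max_right _ _
    linarith
  -- Φ is concentrated on Icc 0 (π/2)
  have hang_mem : ∀ z : ℝ × ℝ, z ∈ Econe → ang z ∈ Icc 0 (π / 2) := by
    intro z hz
    obtain ⟨⟨h1, h2⟩, -⟩ := hz
    simp only [mem_Ici] at h1 h2
    simp only [ang]
    by_cases h : z.2 = 0
    · rw [if_pos h]
      exact ⟨by positivity, le_refl _⟩
    · rw [if_neg h]
      have hz2 : 0 < z.2 := lt_of_le_of_ne h2 (Ne.symm h)
      have hnn : 0 ≤ Real.arctan (z.1 / z.2) := by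
        have := Real.arctan_strictMono.monotone (div_nonneg h1 hz2.le)
        rwa [Real.arctan_zero] at this
      exact ⟨hnn,
        (Real.arctan_lt_pi_div_two _).le⟩
  have hΦIcc : Φ.restrict (Icc 0 (π / 2)) = Φ := by
    refine Measure.restrict_eq_self_of_ae_mem ?_
    rw [ae_iff]
    have h0 : {θ : ℝ | ¬θ ∈ Icc 0 (π / 2)} = (Icc 0 (π / 2))ᶜ := rfl
    rw [h0, hΦ _ measurableSet_Icc.compl]
    have hempty : {z : ℝ × ℝ | z ∈ Econe ∧ 1 ≤ Nn z ∧ ang z ∈ (Icc 0 (π / 2))ᶜ} = ∅ := by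
      ext z
      simp only [mem_setOf_eq, mem_empty_iff_false, iff_false, mem_compl_iff]
      rintro ⟨hzE, -, hmem⟩
      exact hmem (hang_mem z hzE)
    rw [hempty]
    exact measure_empty
  -- key tail computation
  have key : ∀ B₁ : Set ℝ, MeasurableSet B₁ → ∀ a : ℝ, 0 < a →
      μ {z | ang z ∈ B₁ ∧ Nn z ∈ Ici a} = ENNReal.ofReal a⁻¹ * Φ B₁ := by
    intro B₁ hB₁ a ha
    set A := {z | z ∈ Econe ∧ 1 ≤ Nn z ∧ ang z ∈ B₁} with hA_def
    have hAsub : A ⊆ Econe := fun z hz => hz.1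
    have hAmeas : MeasurableSet A := by
      have : A = Econe ∩ (Nn ⁻¹' Ici 1 ∩ ang ⁻¹' B₁) := by
        ext z
        simp only [hA_def, mem_setOf_eq, mem_inter_iff, mem_preimage, mem_Ici, and_assoc]
      rw [this]
      exact hEmeas.inter ((hNmeas measurableSet_Ici).inter (hang_meas hB₁))
    have hainv : (0:ℝ) < a⁻¹ := by positivity
    have hset : {z | ang z ∈ B₁ ∧ Nn z ∈ Ici a} ∩ Econe = a • A := by
      ext z
      rw [mem_smul_set_iff_inv_smul_mem₀ ha.ne']
      simp only [mem_inter_iff, mem_setOf_eq, mem_Ici, hA_def]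
      constructor
      · rintro ⟨⟨hB, hN⟩, hE⟩
        refine ⟨hE_smul a⁻¹ hainv z hE, ?_, ?_⟩
        · rw [hN_smul, abs_of_pos hainv]
          have h := mul_le_mul_of_nonneg_left hN hainv.le
          rwa [inv_mul_cancel₀ ha.ne'] at h
        · rw [hang_smul a⁻¹ hainv]
          exact hB
      · rintro ⟨hE, hN, hB⟩
        have hzE : z ∈ Econe := by
          have h := hE_smul a ha _ hE
          rwa [smul_inv_smul₀ ha.ne'] at h
        rw [hang_smul a⁻¹ hainv] at hB
        rw [hN_smul, abs_of_pos hainv] at hN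
        refine ⟨⟨hB, ?_⟩, hzE⟩
        have h := mul_le_mul_of_nonneg_left hN ha.le
        rwa [mul_one, ← mul_assoc, mul_inv_cancel₀ ha.ne', one_mul] at h
    calc μ {z | ang z ∈ B₁ ∧ Nn z ∈ Ici a}
        = μ ({z | ang z ∈ B₁ ∧ Nn z ∈ Ici a} ∩ Econe) := (measure_inter_conull hμE).symm
      _ = μ (a • A) := by rw [hset]
      _ = ENNReal.ofReal a⁻¹ * μ A := hhom A hAsub hAmeas a ha
      _ = ENNReal.ofReal a⁻¹ * Φ B₁ := by rw [hΦ B₁ hB₁]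
  have keyzero : ∀ s : Set (ℝ × ℝ), s ⊆ {z | Nn z ≤ 0} → μ s = 0 := by
    intro s hs
    refine measure_mono_null (hs.trans ?_) hμE
    intro z hz
    simp only [mem_setOf_eq] at hz
    have : z = 0 := (hN_zero z).1 (le_antisymm hz (hNnonneg z))
    rw [this]
    simp only [mem_compl_iff, Econe, mem_diff, not_and, not_not]
    intro _
    rw [mem_singleton_iff]
    exact Prod.mk_zero_zero.symm
  -- ρ computations
  have hρIci : ∀ a : ℝ, 0 < a → ρ (Ici a) = ENNReal.ofReal a⁻¹ := by
    intro a ha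
    rw [hρ_def, withDensity_apply _ measurableSet_Ici,
      Measure.restrict_restrict measurableSet_Ici]
    have hsub : Ici a ∩ Ioi 0 = Ici a := inter_eq_left.2 fun x hx =>
      mem_Ioi.2 (lt_of_lt_of_le ha hx)
    rw [hsub]
    have h1 : ∫⁻ r in Ici a, ENNReal.ofReal ((r ^ 2)⁻¹) ∂volume
        = ∫⁻ r in Ioi a, ENNReal.ofReal (r ^ (-2 : ℝ)) ∂volume := by
      rw [← setLIntegral_congr Ioi_ae_eq_Ici]
      refine setLIntegral_congr_fun measurableSet_Ioi (fun r hr => ?_)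
      have hr0 : 0 < r := lt_trans ha hr
      congr 1
      rw [show (-2 : ℝ) = -((2:ℕ) : ℝ) by norm_num, Real.rpow_neg hr0.le,
        Real.rpow_natCast]
    have h2 : ∫⁻ r in Ioi a, ENNReal.ofReal (r ^ (-2 : ℝ)) ∂volume
        = ENNReal.ofReal (∫ r in Ioi a, r ^ (-2 : ℝ) ∂volume) := by
      rw [← ofReal_integral_eq_lintegral_ofReal
        (integrableOn_Ioi_rpow_of_lt (by norm_num) ha)]
      filter_upwards [ae_restrict_mem measurableSet_Ioi] with r hr
      exact Real.rpow_nonneg (lt_trans ha hr).le _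
    rw [h1, h2, integral_Ioi_rpow_of_lt (by norm_num) ha]
    norm_num
    rw [Real.rpow_neg_one]
  have hρIic : ∀ a : ℝ, a ≤ 0 → ρ (Iic a) = 0 := by
    intro a ha
    rw [hρ_def, withDensity_apply _ measurableSet_Iic,
      Measure.restrict_restrict measurableSet_Iic]
    have : Iic a ∩ Ioi 0 = ∅ := by
      ext x
      simp only [mem_inter_iff, mem_Iic, mem_Ioi, mem_empty_iff_false, iff_false, not_and]
      intro h1 h2
      linarith
    rw [this, Measure.restrict_empty, lintegral_zero_measure]
  -- the pushforward identity
  haveI hSF : SFinite ρ := by rw [hρ_def]; infer_instance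
  have hmap : Measure.map S μ = Φ.prod ρ := by
    refine Measure.ext_of_generateFrom_of_iUnion
      (image2 (· ×ˢ ·) {s | MeasurableSet s} Dsys)
      (fun n => univ ×ˢ (if n = 0 then Iic 0 else Ici (1 / (n:ℝ))))
      (generateFrom_eq_prod MeasurableSpace.generateFrom_measurableSet generateFrom_Dsys
        isCountablySpanning_measurableSet isCountablySpanning_Dsys).symm
      (MeasurableSpace.isPiSystem_measurableSet.prod isPiSystem_Dsys) ?_ ?_ ?_ ?_
    · ext x
      simp only [mem_iUnion, mem_univ, mem_prod, true_and, iff_true]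
      by_cases hx : x.2 ≤ 0
      · exact ⟨0, by simp [hx]⟩
      · push_neg at hx
        obtain ⟨n, hn⟩ := exists_nat_one_div_lt hx
        refine ⟨n + 1, ?_⟩
        rw [if_neg (Nat.succ_ne_zero n)]
        refine mem_Ici.2 (le_of_lt ?_)
        push_cast
        exact hn
    · intro n
      try dsimp only
      refine mem_image2_of_mem (mem_setOf_eq ▸ MeasurableSet.univ) ?_
      by_cases h : n = 0
      · rw [if_pos h]; exact Or.inl ⟨0, le_refl _, rfl⟩
      · rw [if_neg h]
        have : (0:ℝ) < (n:ℝ) := by exact_mod_cast Nat.pos_of_ne_zero h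
        exact Or.inr ⟨1 / n, by positivity, rfl⟩
    · intro n
      try dsimp only
      by_cases h : n = 0
      · rw [if_pos h, Measure.map_apply hS (MeasurableSet.univ.prod measurableSet_Iic)]
        have hpre : S ⁻¹' (univ ×ˢ Iic (0:ℝ)) = {z | Nn z ≤ 0} := by
          ext z
          simp [hS_def, Set.mem_prod]
        rw [hpre, keyzero _ (le_refl _)]
        exact ENNReal.zero_ne_top
      · rw [if_neg h, Measure.map_apply hS (MeasurableSet.univ.prod measurableSet_Ici)]
        have hn : (0:ℝ) < 1 / (n:ℝ) := by
          have : (0:ℝ) < (n:ℝ) := by exact_mod_cast Nat.pos_of_ne_zero h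
          positivity
        have hpre : S ⁻¹' (univ ×ˢ Ici (1/(n:ℝ)))
            = {z | ang z ∈ univ ∧ Nn z ∈ Ici (1/(n:ℝ))} := by
          ext z
          simp [hS_def, Set.mem_prod]
        rw [hpre, key univ MeasurableSet.univ _ hn]
        exact ENNReal.mul_ne_top ENNReal.ofReal_ne_top hΦfin
    · rintro s ⟨B₁, hB₁, t, ht, rfl⟩
      have hB₁' : MeasurableSet B₁ := hB₁
      have htm : MeasurableSet t := by
        rcases ht with ⟨a, _, rfl⟩ | ⟨a, _, rfl⟩
        exacts [measurableSet_Iic, measurableSet_Ici]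
      rw [Measure.map_apply hS (hB₁'.prod htm), Measure.prod_prod]
      have hpre : S ⁻¹' (B₁ ×ˢ t) = {z | ang z ∈ B₁ ∧ Nn z ∈ t} := by
        ext z
        simp [hS_def, Set.mem_prod]
      rw [hpre]
      rcases ht with ⟨a, ha, rfl⟩ | ⟨a, ha, rfl⟩
      · rw [hρIic a ha, mul_zero]
        exact keyzero _ fun z hz => le_trans hz.2 ha
      · rw [hρIci a ha, key B₁ hB₁' a ha, mul_comm]
  -- g ∘ S = id on Econe
  have hgS : ∀ z ∈ Econe, g (S z) = z := by
    intro z hz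
    obtain ⟨⟨h1, h2⟩, h3⟩ := hz
    simp only [mem_Ici] at h1 h2
    have hz0 : z ≠ 0 := by
      intro hzz
      exact h3 (by rw [mem_singleton_iff, hzz]; exact Prod.mk_zero_zero.symm)
    have hNz : 0 < Nn z := hNposne z hz0
    show (Nn z * Real.sin (ang z) / Nn (Real.sin (ang z), Real.cos (ang z)),
          Nn z * Real.cos (ang z) / Nn (Real.sin (ang z), Real.cos (ang z))) = z
    by_cases h : z.2 = 0
    · have hang : ang z = π / 2 := if_pos h
      have hz1 : 0 < z.1 := by
        rcases lt_or_eq_of_le h1 with h' | h'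
        · exact h'
        · exact absurd (Prod.ext h'.symm h) hz0
      have hNzval : Nn z = z.1 := by
        have hzz : z = z.1 • ((1:ℝ), (0:ℝ)) := by
          ext <;> simp [h]
        calc Nn z = Nn (z.1 • ((1:ℝ), (0:ℝ))) := by rw [← hzz]
          _ = |z.1| * 1 := by rw [hN_smul, hN10]
          _ = z.1 := by rw [mul_one, abs_of_pos hz1]
      rw [hang, Real.sin_pi_div_two, Real.cos_pi_div_two, hN10, hNzval, Prod.ext_iff]
      constructor
      · simp
      · simp [h]
    · have hz2 : 0 < z.2 := lt_of_le_of_ne h2 (Ne.symm h)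
      have hang : ang z = Real.arctan (z.1 / z.2) := if_neg h
      set sq := Real.sqrt (1 + (z.1 / z.2) ^ 2) with hsq_def
      have hsq : 0 < sq := Real.sqrt_pos.2 (by positivity)
      have hne : z.2 * sq ≠ 0 := by positivity
      have hsin : Real.sin (ang z) = z.1 / (z.2 * sq) := by
        rw [hang, Real.sin_arctan, ← hsq_def, div_div]
      have hcos : Real.cos (ang z) = z.2 / (z.2 * sq) := by
        rw [hang, Real.cos_arctan, ← hsq_def]
        rw [eq_div_iff hne]
        field_simp
      have hpair : (Real.sin (ang z), Real.cos (ang z)) = (z.2 * sq)⁻¹ • z := by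
        rw [hsin, hcos, Prod.ext_iff]
        exact ⟨div_eq_inv_mul _ _, div_eq_inv_mul _ _⟩
      have hNd : Nn (Real.sin (ang z), Real.cos (ang z)) = Nn z / (z.2 * sq) := by
        rw [hpair, hN_smul, abs_of_pos (by positivity), inv_mul_eq_div]
      rw [hNd, hsin, hcos, Prod.ext_iff]
      constructor
      · field_simp
      · field_simp
  have hμmap : Measure.map g (Φ.prod ρ) = μ := by
    rw [← hmap, Measure.map_map hgmeas hS]
    have hae : g ∘ S =ᵐ[μ] id := by
      have hE : ∀ᵐ z ∂μ, z ∈ Econe := by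
        rw [ae_iff]
        exact hμE
      filter_upwards [hE] with z hz
      exact hgS z hz
    rw [Measure.map_congr hae, Measure.map_id]
  -- finish
  calc ∫⁻ z, f z ∂μ = ∫⁻ z, f z ∂(Measure.map g (Φ.prod ρ)) := by rw [hμmap]
    _ = ∫⁻ p, f (g p) ∂(Φ.prod ρ) := lintegral_map hf hgmeas
    _ = ∫⁻ θ, ∫⁻ r, f (g (θ, r)) ∂ρ ∂Φ := lintegral_prod _ (hf.comp hgmeas).aemeasurable
    _ = ∫⁻ θ in Icc 0 (π / 2), ∫⁻ r, f (g (θ, r)) ∂ρ ∂Φ := by rw [hΦIcc]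
    _ = ∫⁻ θ in Icc 0 (π / 2),
          ∫⁻ r in Ioi (0 : ℝ),
            f (r * Real.sin θ / Nn (Real.sin θ, Real.cos θ),
               r * Real.cos θ / Nn (Real.sin θ, Real.cos θ)) *
              ENNReal.ofReal ((r ^ 2)⁻¹) ∂volume ∂Φ := by
        refine lintegral_congr fun θ => ?_
        have hmeasd : Measurable fun r : ℝ => ENNReal.ofReal ((r ^ 2)⁻¹) :=
          (measurable_id.pow_const 2).inv.ennreal_ofReal
        have hmg : Measurable fun r : ℝ => f (g (θ, r)) :=
          (hf.comp hgmeas).comp (measurable_const.prodMk measurable_id)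
        rw [show (∫⁻ r, f (g (θ, r)) ∂ρ) = ∫⁻ r, f (g (θ, r))
            ∂((volume.restrict (Ioi 0)).withDensity fun r => ENNReal.ofReal ((r ^ 2)⁻¹))
          from rfl]
        rw [lintegral_withDensity_eq_lintegral_mul _ hmeasd hmg]
        refine lintegral_congr fun r => ?_
        simp only [Pi.mul_apply]
        exact mul_comm _ _
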